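/- Let (X_n) be a sequence of independent Poisson random variables with means (μ_n) such that log n = o(μ_n) as n → ∞. Then X_n / μ_n → 1 almost surely. -/

import Mathlib

open MeasureTheory ProbabilityTheory Real Filter NNReal

lemma poisson_exp_hasSum (r : ℝ≥0) (t a : ℝ) :
    HasSum (fun k : ℕ => poissonPMFReal r k * Real.exp (t * k - a))
      (Real.exp ((r : ℝ) * (Real.exp t - 1) - a)) := by
  have h := (NormedSpace.expSeries_div_hasSum_exp ((r : ℝ) * Real.exp t)).mul_left
      (Real.exp (-(r : ℝ) - a))
  rw [← Real.exp_eq_exp_ℝ] at h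
  have heq : (fun k : ℕ => Real.exp (-(r:ℝ) - a) * (((r:ℝ) * Real.exp t) ^ k / k.factorial))
      = fun k : ℕ => poissonPMFReal r k * Real.exp (t * k - a) := by
    funext k
    unfold poissonPMFReal
    rw [mul_pow, ← Real.exp_nat_mul, Real.exp_sub, Real.exp_sub, Real.exp_neg]
    field_simp
  rw [heq] at h
  have h2 : (r:ℝ) * (Real.exp t - 1) - a = (-(r:ℝ) - a) + (r:ℝ) * Real.exp t := by ring
  rw [h2, Real.exp_add]
  exact h

lemma poisson_chernoff (r : ℝ≥0) (t a : ℝ) (S : Set ℕ) (hS : ∀ k ∈ S, a ≤ t * k) :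
    poissonMeasure r S ≤ ENNReal.ofReal (Real.exp ((r : ℝ) * (Real.exp t - 1) - a)) := by
  have hsum := poisson_exp_hasSum r t a
  have hmeas : poissonMeasure r S = ∑' k, S.indicator (fun k => ENNReal.ofReal (poissonPMFReal r k)) k := by
    rw [poissonMeasure, Measure.sum_apply _ MeasurableSet.of_discrete]
    congr 1; funext k
    by_cases hk : k ∈ S <;> simp [hk, poissonPMFReal]
  rw [hmeas]
  have hnn : ∀ k : ℕ, 0 ≤ poissonPMFReal r k * Real.exp (t * k - a) := by
    intro k; exact mul_nonneg poissonPMFReal_nonneg (Real.exp_nonneg _)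
  calc ∑' k, S.indicator (fun k => ENNReal.ofReal (poissonPMFReal r k)) k
      ≤ ∑' k, ENNReal.ofReal (poissonPMFReal r k * Real.exp (t * k - a)) := by
        refine ENNReal.tsum_le_tsum fun k => ?_
        by_cases hk : k ∈ S
        · rw [Set.indicator_of_mem hk]
          show ENNReal.ofReal (poissonPMFReal r k) ≤ _
          refine ENNReal.ofReal_le_ofReal ?_
          nth_rewrite 1 [← mul_one (poissonPMFReal r k)]
          refine mul_le_mul_of_nonneg_left ?_ poissonPMFReal_nonneg
          rw [← Real.exp_zero]
          exact Real.exp_le_exp.mpr (by linarith [hS k hk])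
        · rw [Set.indicator_of_notMem hk]; exact zero_le
    _ = ENNReal.ofReal (Real.exp ((r : ℝ) * (Real.exp t - 1) - a)) := by
        rw [← ENNReal.ofReal_tsum_of_nonneg hnn hsum.summable, hsum.tsum_eq]

lemma key {Ω : Type*} [MeasureSpace Ω] [IsProbabilityMeasure (ℙ : Measure Ω)]
    (X : ℕ → Ω → ℕ) (hX : ∀ n, Measurable (X n))
    (mu : ℕ → ℝ≥0) (hmu : ∀ n, 0 < mu n)
    (hdist : ∀ n, Measure.map (X n) ℙ = poissonMeasure (mu n))
    (hgrowth : Tendsto (fun n => (mu n : ℝ) / Real.log n) atTop atTop)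
    (ε : ℝ) (hε0 : 0 < ε) (hε1 : ε < 1) :
    ∀ᵐ ω ∂ℙ, ∀ᶠ n in atTop, |(X n ω : ℝ) / (mu n : ℝ) - 1| ≤ ε := by
  set A : ℝ := (1+ε) * Real.log (1+ε) - ε with hAdef
  set B : ℝ := ε + (1-ε) * Real.log (1-ε) with hBdef
  have hlog1 : 1 - (1+ε)⁻¹ < Real.log (1+ε) := by
    have h := Real.log_lt_sub_one_of_pos (x := (1+ε)⁻¹) (by positivity) (by
      intro h; rw [inv_eq_one_div, div_eq_one_iff_eq (by linarith)] at h; linarith)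
    rw [Real.log_inv] at h; linarith
  have hlog2 : 1 - (1-ε)⁻¹ < Real.log (1-ε) := by
    have h1ε : (0:ℝ) < 1 - ε := by linarith
    have h := Real.log_lt_sub_one_of_pos (x := (1-ε)⁻¹) (by positivity) (by
      intro h; rw [inv_eq_one_div, div_eq_one_iff_eq (by linarith)] at h; linarith)
    rw [Real.log_inv] at h; linarith
  have hA : 0 < A := by
    have h1 : (0:ℝ) < 1 + ε := by linarith
    have h2 : (1+ε) * (1+ε)⁻¹ = 1 := mul_inv_cancel₀ (by linarith)
    rw [hAdef]; nlinarith [mul_lt_mul_of_pos_left hlog1 h1]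
  have hB : 0 < B := by
    have h1 : (0:ℝ) < 1 - ε := by linarith
    have h2 : (1-ε) * (1-ε)⁻¹ = 1 := mul_inv_cancel₀ (by linarith)
    rw [hBdef]; nlinarith [mul_lt_mul_of_pos_left hlog2 h1]
  set c : ℝ := min A B with hcdef
  have hc : 0 < c := lt_min hA hB
  set s : ℕ → Set Ω := fun n => X n ⁻¹' {k : ℕ | ε < |(k:ℝ) / (mu n : ℝ) - 1|} with hsdef
  have hbound : ∀ n, ℙ (s n) ≤ ENNReal.ofReal (2 * Real.exp (-(c * (mu n : ℝ)))) := by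
    intro n
    have hμ : (0:ℝ) < (mu n : ℝ) := by exact_mod_cast hmu n
    have hmap : ℙ (s n) = poissonMeasure (mu n) {k : ℕ | ε < |(k:ℝ) / (mu n : ℝ) - 1|} := by
      rw [hsdef, ← hdist n, Measure.map_apply (hX n) MeasurableSet.of_discrete]
    have hsub : {k : ℕ | ε < |(k:ℝ) / (mu n : ℝ) - 1|} ⊆
        {k : ℕ | (1+ε) * (mu n : ℝ) ≤ (k:ℝ)} ∪ {k : ℕ | (k:ℝ) ≤ (1-ε) * (mu n : ℝ)} := by
      intro k hk
      have hk' : ε < |(k:ℝ) / (mu n : ℝ) - 1| := hk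
      rcases lt_abs.mp hk' with h | h
      · left
        show (1+ε) * (mu n : ℝ) ≤ (k:ℝ)
        rw [lt_sub_iff_add_lt, lt_div_iff₀ hμ] at h
        linarith
      · right
        show (k:ℝ) ≤ (1-ε) * (mu n : ℝ)
        have : (k:ℝ) / (mu n : ℝ) < 1 - ε := by linarith
        rw [div_lt_iff₀ hμ] at this
        linarith
    have hch1 : poissonMeasure (mu n) {k : ℕ | (1+ε) * (mu n : ℝ) ≤ (k:ℝ)} ≤
        ENNReal.ofReal (Real.exp (-(c * (mu n : ℝ)))) := by
      have ht : 0 < Real.log (1+ε) := Real.log_pos (by linarith)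
      refine le_trans (poisson_chernoff (mu n) (Real.log (1+ε))
        (Real.log (1+ε) * ((1+ε) * (mu n : ℝ))) _ ?_) ?_
      · intro k hk
        exact mul_le_mul_of_nonneg_left hk ht.le
      · refine ENNReal.ofReal_le_ofReal (Real.exp_le_exp.mpr ?_)
        rw [Real.exp_log (by linarith)]
        have hcA : c ≤ A := min_le_left _ _
        nlinarith
    have hch2 : poissonMeasure (mu n) {k : ℕ | (k:ℝ) ≤ (1-ε) * (mu n : ℝ)} ≤
        ENNReal.ofReal (Real.exp (-(c * (mu n : ℝ)))) := by
      have ht : Real.log (1-ε) < 0 := Real.log_neg (by linarith) (by linarith)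
      refine le_trans (poisson_chernoff (mu n) (Real.log (1-ε))
        (Real.log (1-ε) * ((1-ε) * (mu n : ℝ))) _ ?_) ?_
      · intro k hk
        exact mul_le_mul_of_nonpos_left hk ht.le
      · refine ENNReal.ofReal_le_ofReal (Real.exp_le_exp.mpr ?_)
        rw [Real.exp_log (by linarith)]
        have hcB : c ≤ B := min_le_right _ _
        nlinarith
    calc ℙ (s n) ≤ poissonMeasure (mu n) ({k : ℕ | (1+ε) * (mu n : ℝ) ≤ (k:ℝ)} ∪
          {k : ℕ | (k:ℝ) ≤ (1-ε) * (mu n : ℝ)}) := by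
          rw [hmap]; exact measure_mono hsub
      _ ≤ _ + _ := measure_union_le _ _
      _ ≤ ENNReal.ofReal (Real.exp (-(c * (mu n : ℝ)))) +
            ENNReal.ofReal (Real.exp (-(c * (mu n : ℝ)))) := add_le_add hch1 hch2
      _ = ENNReal.ofReal (2 * Real.exp (-(c * (mu n : ℝ)))) := by
          rw [← ENNReal.ofReal_add (Real.exp_nonneg _) (Real.exp_nonneg _), two_mul]
  have hsummable : Summable (fun n : ℕ => 2 * Real.exp (-(c * (mu n : ℝ)))) := by
    have h2 : Summable (fun n : ℕ => 1 / (n:ℝ)^2) :=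
      Real.summable_one_div_nat_pow.mpr one_lt_two
    refine summable_of_isBigO_nat h2 ?_
    rw [Asymptotics.isBigO_iff]
    refine ⟨2, ?_⟩
    have hg : Tendsto (fun n => c * ((mu n : ℝ) / Real.log n)) atTop atTop :=
      hgrowth.const_mul_atTop hc
    filter_upwards [hg.eventually_ge_atTop 2, eventually_ge_atTop 2] with n hn hn2
    have hn1 : (1:ℝ) < n := by exact_mod_cast hn2
    have hlogn : 0 < Real.log n := Real.log_pos hn1
    have hcm : 2 * Real.log n ≤ c * (mu n : ℝ) := by
      rw [← mul_div_assoc, le_div_iff₀ hlogn] at hn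
      linarith
    have hexp : Real.exp (-(c * (mu n : ℝ))) ≤ 1 / (n:ℝ)^2 := by
      have : Real.exp (-(c * (mu n : ℝ))) ≤ Real.exp (-(2 * Real.log n)) :=
        Real.exp_le_exp.mpr (by linarith)
      refine this.trans (le_of_eq ?_)
      rw [Real.exp_neg, show (2:ℝ) * Real.log n = ((2:ℕ):ℝ) * Real.log n by norm_num,
        Real.exp_nat_mul, Real.exp_log (by linarith), one_div]
    rw [Real.norm_eq_abs, Real.norm_eq_abs, abs_of_nonneg (by positivity),
      abs_of_nonneg (by positivity)]
    nlinarith [Real.exp_nonneg (-(c * (mu n : ℝ)))]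
  have htsum : (∑' n, ℙ (s n)) ≠ ⊤ := by
    refine ne_top_of_le_ne_top ?_ (ENNReal.tsum_le_tsum hbound)
    rw [← ENNReal.ofReal_tsum_of_nonneg (fun n => by positivity) hsummable]
    exact ENNReal.ofReal_ne_top
  filter_upwards [ae_eventually_notMem htsum] with ω hω
  filter_upwards [hω] with n hn
  exact not_lt.mp hn

theorem stmt_3 {Ω : Type*} [MeasureSpace Ω] [IsProbabilityMeasure (ℙ : Measure Ω)]
    (X : ℕ → Ω → ℕ) (hX : ∀ n, Measurable (X n))
    (hindep : iIndepFun X ℙ)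
    (mu : ℕ → ℝ≥0) (hmu : ∀ n, 0 < mu n)
    (hdist : ∀ n, Measure.map (X n) ℙ = poissonMeasure (mu n))
    (hgrowth : Tendsto (fun n => (mu n : ℝ) / Real.log n) atTop atTop) :
    ∀ᵐ ω ∂ℙ, Tendsto (fun n => (X n ω : ℝ) / (mu n : ℝ)) atTop (nhds 1) := by
  have hall : ∀ᵐ ω ∂ℙ, ∀ m : ℕ,
      ∀ᶠ n in atTop, |(X n ω : ℝ) / (mu n : ℝ) - 1| ≤ 1 / (m + 2 : ℝ) := by
    rw [ae_all_iff]
    intro m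
    refine key X hX mu hmu hdist hgrowth (1 / (m + 2 : ℝ)) (by positivity) ?_
    rw [div_lt_one (by positivity)]
    have : (0:ℝ) ≤ (m:ℝ) := Nat.cast_nonneg m
    linarith
  filter_upwards [hall] with ω hω
  rw [Metric.tendsto_atTop]
  intro ε hε
  obtain ⟨m, hm⟩ := exists_nat_one_div_lt hε
  obtain ⟨N, hN⟩ := eventually_atTop.mp (hω m)
  refine ⟨N, fun n hn => ?_⟩
  rw [Real.dist_eq]
  have h1 : (1:ℝ) / (m + 2 : ℝ) ≤ 1 / (m + 1 : ℝ) := by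
    apply div_le_div_of_nonneg_left (by norm_num) (by positivity) (by linarith)
  calc |(X n ω : ℝ) / (mu n : ℝ) - 1| ≤ 1 / (m + 2 : ℝ) := hN n hn
    _ ≤ 1 / (m + 1 : ℝ) := h1
    _ < ε := hm
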